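/- A connected nontrivial subgraph H of a connected graph G is a face subgraph of G (i.e., H = G_F for some nonempty proper face F of ∇_G) if and only if H is a maximal bipartite subgraph of the induced subgraph G[V(H)]. -/

import Mathlib

noncomputable def stdBasis {N : ℕ} (i : Fin N) : Fin N → ℝ := Pi.single i 1

def nabla {N : ℕ} (G : SimpleGraph (Fin N)) : Set (Fin N → ℝ) :=
  {x | ∃ i j, G.Adj i j ∧ x = stdBasis i - stdBasis j}

noncomputable def inn {N : ℕ} (x α : Fin N → ℝ) : ℝ := ∑ i, x i * α i

def IsFace {N : ℕ} (G : SimpleGraph (Fin N)) (F : Set (Fin N → ℝ)) : Prop :=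
  ∃ α : Fin N → ℝ, (∀ x ∈ nabla G, -1 ≤ inn x α) ∧
    F = {x | x ∈ nabla G ∧ inn x α = -1}

def IsFacet {N : ℕ} (G : SimpleGraph (Fin N)) (F : Set (Fin N → ℝ)) : Prop :=
  IsFace G F ∧ Module.finrank ℝ (vectorSpan ℝ F) = N - 2

def faceGraph {N : ℕ} (F : Set (Fin N → ℝ)) : SimpleGraph (Fin N) :=
  SimpleGraph.fromRel (fun i j => stdBasis i - stdBasis j ∈ F)

def MaxBipartiteSubgraph {N : ℕ} (G H : SimpleGraph (Fin N)) : Prop :=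
  H ≤ G ∧ H.Colorable 2 ∧ ∀ H', H' ≤ G → H'.Colorable 2 → H ≤ H' → H' = H

def inducedOn {N : ℕ} (G : SimpleGraph (Fin N)) (s : Set (Fin N)) : SimpleGraph (Fin N) where
  Adj i j := G.Adj i j ∧ i ∈ s ∧ j ∈ s
  symm := by constructor; intro i j h; exact ⟨h.1.symm, h.2.2, h.2.1⟩
  loopless := by constructor; intro i h; exact (G.ne_of_adj h.1) rfl

lemma inn_basis {N : ℕ} (i j : Fin N) (α : Fin N → ℝ) :
    inn (stdBasis i - stdBasis j) α = α i - α j := by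
  simp [inn, stdBasis, Pi.single_apply, sub_mul, ite_mul, Finset.sum_sub_distrib]

lemma decode {N : ℕ} {G : SimpleGraph (Fin N)} {i j : Fin N} (hij : i ≠ j)
    (h : stdBasis i - stdBasis j ∈ nabla G) : G.Adj i j := by
  obtain ⟨i', j', hadj, heq⟩ := h
  have hi := congrFun heq i
  have hj := congrFun heq j
  have hi'j' : i' ≠ j' := hadj.ne
  simp only [Pi.sub_apply, stdBasis, Pi.single_apply] at hi hj
  by_cases e1 : i = i' <;> by_cases e4 : j = j'
  · rw [e1, e4]; exact hadj
  all_goals (exfalso; split_ifs at hi hj <;> first | tauto | norm_num at hi hj | (norm_num at hi) | (norm_num at hj))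

lemma walkInt {N : ℕ} {H : SimpleGraph (Fin N)} {s : Set (Fin N)} (α : Fin N → ℝ)
    (hα : ∀ a b : Fin N, H.Adj a b → α a - α b = 1 ∨ α a - α b = -1)
    {u v : s} (w : (SimpleGraph.induce s H).Walk u v) :
    ∃ k : ℤ, α ↑v - α ↑u = k ∧ (Even k ↔ Even w.length) := by
  induction w with
  | nil => exact ⟨0, by simp, by simp⟩
  | @cons u w' v h p ih =>
    obtain ⟨k, hk, hpar⟩ := ih
    have hadj : H.Adj ↑u ↑w' := h
    rcases hα _ _ hadj with h1 | h1
    · refine ⟨k - 1, by push_cast; linarith, ?_⟩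
      simp only [SimpleGraph.Walk.length_cons, Nat.even_add_one, ← hpar, Int.even_sub]
      simp [Int.even_add_one, parity_simps]
    · refine ⟨k + 1, by push_cast; linarith, ?_⟩
      simp only [SimpleGraph.Walk.length_cons, Nat.even_add_one, ← hpar]
      simp [Int.even_add_one, parity_simps]

lemma walkColor {N : ℕ} {H : SimpleGraph (Fin N)} {s : Set (Fin N)} (c : Fin N → Fin 2)
    (hc : ∀ a b : Fin N, H.Adj a b → c a ≠ c b)
    {u v : s} (w : (SimpleGraph.induce s H).Walk u v) :
    (Even w.length ↔ c ↑u = c ↑v) := by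
  induction w with
  | nil => simp
  | @cons u w' v h p ih =>
    have hadj : H.Adj ↑u ↑w' := h
    have := hc _ _ hadj
    simp only [SimpleGraph.Walk.length_cons, Nat.even_add_one, ih]
    have h1 := (c ↑u).isLt; have h2 := (c (↑w' : Fin N)).isLt; have h3 := (c ↑v).isLt
    simp only [Ne, Fin.ext_iff] at *
    omega

lemma le_inducedOn {N : ℕ} {G H : SimpleGraph (Fin N)} (hHG : H ≤ G) :
    H ≤ inducedOn G H.support := by
  intro a b hab
  exact ⟨hHG hab, ⟨b, hab⟩, ⟨a, hab.symm⟩⟩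

theorem stmt7 {N : ℕ} (G : SimpleGraph (Fin N)) (hG : G.Connected)
    (H : SimpleGraph (Fin N)) (hHG : H ≤ G)
    (hconn : (SimpleGraph.induce H.support H).Connected) (hnt : H ≠ ⊥) :
    (∃ F : Set (Fin N → ℝ), IsFace G F ∧ F.Nonempty ∧ faceGraph F = H) ↔
      MaxBipartiteSubgraph (inducedOn G H.support) H := by
  classical
  constructor
  · rintro ⟨F, ⟨α, hα, hF⟩, hne, hfg⟩
    have hHadj : ∀ a b : Fin N, H.Adj a b → α a - α b = 1 ∨ α a - α b = -1 := by
      intro a b hab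
      rw [← hfg] at hab
      obtain ⟨hne', hor⟩ := hab
      rcases hor with hm | hm
      · right
        rw [hF] at hm
        have := hm.2
        rwa [inn_basis] at this
      · left
        rw [hF] at hm
        have := hm.2
        rw [inn_basis] at this
        linarith
    have hbound : ∀ a b : Fin N, G.Adj a b → -1 ≤ α a - α b := by
      intro a b hab
      have := hα _ ⟨a, b, hab, rfl⟩
      rwa [inn_basis] at this
    have hedge : ∃ a b, H.Adj a b := by
      by_contra hc
      push_neg at hc
      apply hnt
      ext a b
      simp [hc a b]
    obtain ⟨v₀, w₀, hv₀w₀⟩ := hedge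
    have hv₀ : v₀ ∈ H.support := ⟨w₀, hv₀w₀⟩
    have hint : ∀ a : Fin N, a ∈ H.support → ∃ k : ℤ, α a - α v₀ = k := by
      intro a ha
      obtain ⟨w⟩ := hconn.preconnected ⟨v₀, hv₀⟩ ⟨a, ha⟩
      obtain ⟨k, hk, _⟩ := walkInt α hHadj w
      exact ⟨k, hk⟩
    refine ⟨le_inducedOn hHG, ?_, ?_⟩
    · refine ⟨SimpleGraph.Coloring.mk
        (fun a => if ∃ m : ℤ, α a - α v₀ = 2 * m then 0 else 1) ?_⟩
      intro a b hab
      have ha : a ∈ H.support := ⟨b, hab⟩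
      have hb : b ∈ H.support := ⟨a, hab.symm⟩
      obtain ⟨ka, hka⟩ := hint a ha
      obtain ⟨kb, hkb⟩ := hint b hb
      have hd : ka - kb = 1 ∨ ka - kb = -1 := by
        rcases hHadj a b hab with h1 | h1
        · left
          have : (ka : ℝ) - kb = 1 := by linarith
          exact_mod_cast this
        · right
          have : (ka : ℝ) - kb = -1 := by linarith
          exact_mod_cast this
      have hPa : (∃ m : ℤ, α a - α v₀ = 2 * m) ↔ Even ka := by
        constructor
        · rintro ⟨m, hm⟩
          rw [hka] at hm
          have : ka = 2 * m := by exact_mod_cast hm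
          exact ⟨m, by omega⟩
        · rintro ⟨m, hm⟩
          refine ⟨m, ?_⟩
          rw [hka]
          have : ka = 2 * m := by omega
          rw [this]; push_cast; ring
      have hPb : (∃ m : ℤ, α b - α v₀ = 2 * m) ↔ Even kb := by
        constructor
        · rintro ⟨m, hm⟩
          rw [hkb] at hm
          have : kb = 2 * m := by exact_mod_cast hm
          exact ⟨m, by omega⟩
        · rintro ⟨m, hm⟩
          refine ⟨m, ?_⟩
          rw [hkb]
          have : kb = 2 * m := by omega
          rw [this]; push_cast; ring
      by_cases pa : ∃ m : ℤ, α a - α v₀ = 2 * m <;>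
        by_cases pb : ∃ m : ℤ, α b - α v₀ = 2 * m <;>
        simp only [pa, pb, if_true, if_false, ite_true, ite_false, if_pos, if_neg, ne_eq]
      · obtain ⟨m, hm⟩ := hPa.mp pa
        obtain ⟨n, hn⟩ := hPb.mp pb
        intro _; omega
      · decide
      · decide
      · rcases Int.even_or_odd ka with h | h
        · exact absurd (hPa.mpr h) pa
        rcases Int.even_or_odd kb with h' | h'
        · exact absurd (hPb.mpr h') pb
        obtain ⟨m, hm⟩ := h
        obtain ⟨n, hn⟩ := h'
        intro _; omega
    · intro H' hH'le hH'col hHH'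
      obtain ⟨c'⟩ := hH'col
      refine le_antisymm ?_ hHH'
      intro a b hab
      obtain ⟨hGab, ha, hb⟩ := hH'le hab
      obtain ⟨w⟩ := hconn.preconnected ⟨a, ha⟩ ⟨b, hb⟩
      obtain ⟨k, hk, hkpar⟩ := walkInt α hHadj w
      have hk' : α b - α a = (k : ℝ) := hk
      have hcol : Even w.length ↔ c' a = c' b :=
        walkColor (fun x => c' x) (fun x y hxy => c'.valid (hHH' hxy)) w
      have hne' : c' a ≠ c' b := c'.valid hab
      have hodd : ¬ Even k := fun he => hne' (hcol.mp (hkpar.mp he))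
      have hb1 : -1 ≤ (k : ℝ) := by
        rw [← hk']
        exact hbound b a hGab.symm
      have hb2 : (k : ℝ) ≤ 1 := by
        have := hbound a b hGab
        linarith
      have hk1 : k = 1 ∨ k = -1 := by
        have h1 : -1 ≤ k := by exact_mod_cast hb1
        have h2 : k ≤ 1 := by exact_mod_cast hb2
        rw [Int.not_even_iff] at hodd
        omega
      rw [← hfg]
      refine ⟨hab.ne, ?_⟩
      rcases hk1 with h | h
      · left
        rw [hF]
        refine ⟨⟨a, b, hGab, rfl⟩, ?_⟩
        rw [inn_basis]
        rw [h] at hk'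
        push_cast at hk'
        linarith
      · right
        rw [hF]
        refine ⟨⟨b, a, hGab.symm, rfl⟩, ?_⟩
        rw [inn_basis]
        rw [h] at hk'
        push_cast at hk'
        linarith
  · rintro ⟨hle, ⟨c⟩, hmax⟩
    have hfin2 : ∀ x : Fin 2, x ≠ 0 → x = 1 := by decide
    set α : Fin N → ℝ :=
      fun a => if a ∈ H.support then (if c a = 0 then 1/2 else -(1/2)) else 0 with hαdef
    have habs : ∀ a, α a = 1/2 ∨ α a = -(1/2) ∨ α a = 0 := by
      intro a
      simp only [hαdef]
      split_ifs <;> norm_num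
    have hαsupp : ∀ a b : Fin N, α a - α b = -1 →
        a ∈ H.support ∧ b ∈ H.support ∧ c a ≠ 0 ∧ c b = 0 := by
      intro a b hab
      by_cases ha : a ∈ H.support <;> by_cases hb : b ∈ H.support <;>
        by_cases ca : c a = 0 <;> by_cases cb : c b = 0 <;>
        simp only [hαdef, ha, hb, ca, cb, if_true, if_false, ite_true, ite_false] at hab <;>
        first
          | (exact ⟨ha, hb, ca, cb⟩)
          | norm_num at hab
    have hval : ∀ a b : Fin N, H.Adj a b → c a ≠ 0 →
        stdBasis a - stdBasis b ∈ {x | x ∈ nabla G ∧ inn x α = -1} := by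
      intro a b hab ca
      have ha : a ∈ H.support := ⟨b, hab⟩
      have hb : b ∈ H.support := ⟨a, hab.symm⟩
      have cb : c b = 0 := by
        have := c.valid hab
        have h1 := hfin2 _ ca
        by_contra hcb
        have h2 := hfin2 _ hcb
        rw [h1, h2] at this
        exact this rfl
      refine ⟨⟨a, b, hHG hab, rfl⟩, ?_⟩
      rw [inn_basis, hαdef]
      simp only [ha, hb, ca, cb, if_true, if_false, ite_true, ite_false]
      norm_num
    refine ⟨{x | x ∈ nabla G ∧ inn x α = -1}, ⟨α, ?_, rfl⟩, ?_, ?_⟩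
    · rintro x ⟨i, j, hij, rfl⟩
      rw [inn_basis]
      rcases habs i with h | h | h <;> rcases habs j with h' | h' | h' <;>
        rw [h, h'] <;> norm_num
    · have hedge : ∃ a b, H.Adj a b := by
        by_contra hc
        push_neg at hc
        apply hnt
        ext a b
        simp [hc a b]
      obtain ⟨a, b, hab⟩ := hedge
      by_cases ca : c a = 0
      · have cb : c b ≠ 0 := by
          intro h
          exact c.valid hab (by rw [ca, h])
        exact ⟨_, hval b a hab.symm cb⟩
      · exact ⟨_, hval a b hab ca⟩
    · have key : ∀ a b : Fin N, a ≠ b →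
          stdBasis a - stdBasis b ∈ {x | x ∈ nabla G ∧ inn x α = -1} → H.Adj a b := by
        intro a b hne hmem
        obtain ⟨hnab, hinn⟩ := hmem
        have hGab : G.Adj a b := decode hne hnab
        rw [inn_basis] at hinn
        obtain ⟨ha, hb, ca, cb⟩ := hαsupp a b hinn
        set H' := H ⊔ SimpleGraph.fromEdgeSet {s(a, b)} with hH'
        have hle' : H' ≤ inducedOn G H.support := by
          refine sup_le (le_inducedOn hHG) ?_
          intro x y hxy
          obtain ⟨hmem', hxy'⟩ := (SimpleGraph.fromEdgeSet_adj _).mp hxy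
          rw [Set.mem_singleton_iff, Sym2.eq_iff] at hmem'
          rcases hmem' with ⟨hx, hy⟩ | ⟨hx, hy⟩
          · subst hx; subst hy; exact ⟨hGab, ha, hb⟩
          · subst hx; subst hy; exact ⟨hGab.symm, hb, ha⟩
        have hcol' : H'.Colorable 2 := by
          refine ⟨SimpleGraph.Coloring.mk (fun x => c x) ?_⟩
          intro x y hxy
          rcases hxy with hxy | hxy
          · exact c.valid hxy
          · obtain ⟨hmem', _⟩ := (SimpleGraph.fromEdgeSet_adj _).mp hxy
            rw [Set.mem_singleton_iff, Sym2.eq_iff] at hmem'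
            have hca : c a ≠ c b := by
              rw [hfin2 _ ca, cb]
              decide
            rcases hmem' with ⟨hx, hy⟩ | ⟨hx, hy⟩
            · subst hx; subst hy; exact hca
            · subst hx; subst hy; exact hca.symm
        have hH'H : H' = H := hmax H' hle' hcol' le_sup_left
        have : H'.Adj a b :=
          Or.inr ((SimpleGraph.fromEdgeSet_adj _).mpr ⟨rfl, hne⟩)
        rwa [hH'H] at this
      ext a b
      constructor
      · rintro ⟨hne, hor⟩
        rcases hor with hm | hm
        · exact key a b hne hm
        · exact (key b a (Ne.symm hne) hm).symm
      · intro hab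
        refine ⟨hab.ne, ?_⟩
        by_cases ca : c a = 0
        · right
          refine hval b a hab.symm ?_
          intro h
          exact c.valid hab (by rw [ca, h])
        · left
          exact hval a b hab ca
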